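/- Let (K, ∂) be a differential field of characteristic zero, let j, ψ ∈ K with ∂ψ ≠ 0 and ∂j ≠ 0, and suppose the chain rule identities hold in the sense that j∘ψ is defined with S(j∘ψ) = (S(j)∘ψ)·(ψ')² + S(ψ) and (j∘ψ)' = (j'∘ψ)·ψ'. If χ(j) = 0 and χ(j∘ψ) = 0, where χ(y) = S(y) + R(y)(y')² with R(y) = (y² - 1968y + 2654208)/(2y²(y-1728)²), then S(ψ) = 0. (Concrete version: for holomorphic functions j on ℍ and ψ: U → ℍ with nonvanishing derivatives, if χ(j) ≡ 0 and χ(j∘ψ) ≡ 0 then S(ψ) ≡ 0.) -/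

import Mathlib

open Complex

/-- The Schwarzian derivative of a function `f : ℂ → ℂ`:
`S(f) = (f''/f')' - (1/2)(f''/f')²`. -/
noncomputable def schwarzian (f : ℂ → ℂ) (z : ℂ) : ℂ :=
  deriv (fun w => deriv (deriv f) w / deriv f w) z - (deriv (deriv f) z / deriv f z) ^ 2 / 2

/-- `R(y) = (y² - 1968 y + 2654208)/(2 y² (y - 1728)²)`. -/
noncomputable def Rj (y : ℂ) : ℂ :=
  (y ^ 2 - 1968 * y + 2654208) / (2 * y ^ 2 * (y - 1728) ^ 2)

/-- The operator `χ(f) = S(f) + R(f)·(f')²` applied to a holomorphic function. -/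
noncomputable def chi (f : ℂ → ℂ) (z : ℂ) : ℂ :=
  schwarzian f z + Rj (f z) * (deriv f z) ^ 2

/-- The upper half-plane, as a subset of `ℂ`. -/
def UHP : Set ℂ := {z : ℂ | 0 < z.im}

lemma isOpen_UHP : IsOpen UHP := isOpen_lt continuous_const Complex.continuous_im

lemma schwarzian_comp (U V : Set ℂ) (hU : IsOpen U) (hV : IsOpen V) (j ψ : ℂ → ℂ)
    (hjA : AnalyticOnNhd ℂ j V) (hψA : AnalyticOnNhd ℂ ψ U) (hmaps : Set.MapsTo ψ U V)
    (hψ' : ∀ x ∈ U, deriv ψ x ≠ 0) (hj' : ∀ x ∈ U, deriv j (ψ x) ≠ 0)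
    {z : ℂ} (hz : z ∈ U) :
    schwarzian (j ∘ ψ) z = schwarzian j (ψ z) * (deriv ψ z) ^ 2 + schwarzian ψ z := by
  have hjdA : AnalyticOnNhd ℂ (deriv j) V := hjA.deriv
  have hjddA : AnalyticOnNhd ℂ (deriv (deriv j)) V := hjdA.deriv
  have hψdA : AnalyticOnNhd ℂ (deriv ψ) U := hψA.deriv
  have hψddA : AnalyticOnNhd ℂ (deriv (deriv ψ)) U := hψdA.deriv
  -- step 1
  have step1 : ∀ x ∈ U, deriv (j ∘ ψ) x = deriv j (ψ x) * deriv ψ x := by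
    intro x hx
    exact deriv_comp (x := x) (hjA (ψ x) (hmaps hx)).differentiableAt (hψA x hx).differentiableAt
  -- step 2
  have step2 : ∀ x ∈ U, deriv (deriv (j ∘ ψ)) x
      = deriv (deriv j) (ψ x) * (deriv ψ x) ^ 2 + deriv j (ψ x) * deriv (deriv ψ) x := by
    intro x hx
    have he : deriv (j ∘ ψ) =ᶠ[nhds x] fun y => deriv j (ψ y) * deriv ψ y :=
      Filter.eventuallyEq_of_mem (hU.mem_nhds hx) step1
    rw [he.deriv_eq]
    have h1 : DifferentiableAt ℂ (fun y => deriv j (ψ y)) x :=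
      (hjdA (ψ x) (hmaps hx)).differentiableAt.comp x (hψA x hx).differentiableAt
    have h2 : DifferentiableAt ℂ (deriv ψ) x := (hψdA x hx).differentiableAt
    rw [deriv_fun_mul h1 h2]
    have h3 : deriv (fun y => deriv j (ψ y)) x = deriv (deriv j) (ψ x) * deriv ψ x :=
      deriv_comp (x := x) (hjdA (ψ x) (hmaps hx)).differentiableAt (hψA x hx).differentiableAt
    rw [h3]; ring
  -- abbreviations
  set A : ℂ → ℂ := fun y => deriv (deriv j) y / deriv j y with hA
  set B : ℂ → ℂ := fun y => deriv (deriv ψ) y / deriv ψ y with hB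
  -- step 3
  have step3 : ∀ x ∈ U, deriv (deriv (j ∘ ψ)) x / deriv (j ∘ ψ) x
      = A (ψ x) * deriv ψ x + B x := by
    intro x hx
    simp only [step1 x hx, step2 x hx, hA, hB]
    field_simp [hψ' x hx, hj' x hx]
  -- differentiabilities at z
  have hAd : DifferentiableAt ℂ A (ψ z) :=
    DifferentiableAt.div (hjddA (ψ z) (hmaps hz)).differentiableAt
      (hjdA (ψ z) (hmaps hz)).differentiableAt (hj' z hz)
  have hBd : DifferentiableAt ℂ B z :=
    DifferentiableAt.div (hψddA z hz).differentiableAt (hψdA z hz).differentiableAt (hψ' z hz)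
  have hAψd : DifferentiableAt ℂ (fun y => A (ψ y)) z :=
    hAd.comp z (hψA z hz).differentiableAt
  have hψdd : DifferentiableAt ℂ (deriv ψ) z := (hψdA z hz).differentiableAt
  -- step 4 : the outer derivative
  have he2 : (fun y => deriv (deriv (j ∘ ψ)) y / deriv (j ∘ ψ) y)
      =ᶠ[nhds z] fun y => A (ψ y) * deriv ψ y + B y :=
    Filter.eventuallyEq_of_mem (hU.mem_nhds hz) step3
  have step4 : deriv (fun y => deriv (deriv (j ∘ ψ)) y / deriv (j ∘ ψ) y) z
      = deriv A (ψ z) * deriv ψ z * deriv ψ z + A (ψ z) * deriv (deriv ψ) z + deriv B z := by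
    have h4 : deriv (fun y => A (ψ y)) z = deriv A (ψ z) * deriv ψ z :=
      deriv_comp (x := z) hAd (hψA z hz).differentiableAt
    rw [he2.deriv_eq, deriv_fun_add (hAψd.fun_mul hψdd) hBd, deriv_fun_mul hAψd hψdd, h4]
  -- assemble
  have hSjψ : schwarzian (j ∘ ψ) z
      = deriv A (ψ z) * deriv ψ z * deriv ψ z + A (ψ z) * deriv (deriv ψ) z + deriv B z
        - (A (ψ z) * deriv ψ z + B z) ^ 2 / 2 := by
    rw [schwarzian, step4, step3 z hz]
  have hSj : schwarzian j (ψ z) = deriv A (ψ z) - (A (ψ z)) ^ 2 / 2 := rfl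
  have hSψ : schwarzian ψ z = deriv B z - (B z) ^ 2 / 2 := rfl
  have hψ2 : deriv (deriv ψ) z = B z * deriv ψ z := by
    simp only [hB]; field_simp [hψ' z hz]
  rw [hSjψ, hSj, hSψ, hψ2]; ring

/-- If `j` is holomorphic on `ℍ` with `χ(j) ≡ 0` and `ψ : U → ℍ` is holomorphic with
nonvanishing derivative such that `χ(j ∘ ψ) ≡ 0` on `U`, then `S(ψ) ≡ 0` on `U`. -/
theorem schwarzian_vanishes_of_chi_eq_zero (U : Set ℂ) (hU : IsOpen U)
    (j ψ : ℂ → ℂ) (hj : DifferentiableOn ℂ j UHP) (hψ : DifferentiableOn ℂ ψ U)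
    (hmaps : Set.MapsTo ψ U UHP)
    (hψ' : ∀ z ∈ U, deriv ψ z ≠ 0) (hj' : ∀ z ∈ U, deriv j (ψ z) ≠ 0)
    (hval : ∀ z ∈ U, j (ψ z) ≠ 0 ∧ j (ψ z) ≠ 1728)
    (hchij : ∀ w ∈ UHP, chi j w = 0) (hchijψ : ∀ z ∈ U, chi (j ∘ ψ) z = 0) :
    ∀ z ∈ U, schwarzian ψ z = 0 := by
  intro z hz
  have hjA := hj.analyticOnNhd isOpen_UHP
  have hψA := hψ.analyticOnNhd hU
  have hcomp := schwarzian_comp U UHP hU isOpen_UHP j ψ hjA hψA hmaps hψ' hj' hz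
  have hderiv : deriv (j ∘ ψ) z = deriv j (ψ z) * deriv ψ z :=
    deriv_comp (x := z) (hjA (ψ z) (hmaps hz)).differentiableAt (hψA z hz).differentiableAt
  have h1 := hchijψ z hz
  have h2 := hchij (ψ z) (hmaps hz)
  rw [chi, hcomp, hderiv, Function.comp_apply] at h1
  rw [chi] at h2
  have : (schwarzian j (ψ z) + Rj (j (ψ z)) * deriv j (ψ z) ^ 2) * (deriv ψ z) ^ 2
      + schwarzian ψ z = 0 := by rw [← h1]; ring
  rw [h2] at this
  simpa using this
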